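/- Let n > 1, α > 2, ε > 0 and δ > 0. Then for every z > 0, the derivative of the regularized mobility satisfies 0 ≤ f_{ε,δ}′(z) = z^{n+α−1}·(n·z^{α} + ε·α·z^{n}) / (z^{α} + ε·z^{n} + δ·z^{n+α})² ≤ max(n, α) · z^{n−1}. -/

import Mathlib

/-- The derivative of the regularized mobility: its explicit formula, nonnegativity,
and the bound `f_{ε,δ}′(z) ≤ max(n, α) · z^{n−1}` for `z > 0`. -/
theorem regularized_mobility_derivative_bound (n α ε δ : ℝ)
    (hn : 1 < n) (hα : 2 < α) (hε : 0 < ε) (hδ : 0 < δ)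
    (f : ℝ → ℝ)
    (hf : ∀ z : ℝ, 0 < z →
      f z = z ^ (n + α) / (z ^ α + ε * z ^ n + δ * z ^ (n + α))) :
    ∀ z : ℝ, 0 < z →
      deriv f z =
        z ^ (n + α - 1) * (n * z ^ α + ε * α * z ^ n) /
          (z ^ α + ε * z ^ n + δ * z ^ (n + α)) ^ 2 ∧
      0 ≤ deriv f z ∧
      deriv f z ≤ max n α * z ^ (n - 1) := by
  intro z hz
  have hz0 : z ≠ 0 := ne_of_gt hz
  have ha0 : (0:ℝ) < z ^ α := Real.rpow_pos_of_pos hz α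
  have hb0 : (0:ℝ) < z ^ n := Real.rpow_pos_of_pos hz n
  have hab0 : (0:ℝ) < z ^ (n + α) := Real.rpow_pos_of_pos hz (n + α)
  have hD : (0:ℝ) < z ^ α + ε * z ^ n + δ * z ^ (n + α) := by positivity
  -- derivative computation
  have h1 : HasDerivAt (fun x : ℝ => x ^ (n + α)) ((n + α) * z ^ (n + α - 1)) z :=
    Real.hasDerivAt_rpow_const (Or.inl hz0)
  have h2 : HasDerivAt (fun x : ℝ => x ^ α + ε * x ^ n + δ * x ^ (n + α))
      (α * z ^ (α - 1) + ε * (n * z ^ (n - 1)) + δ * ((n + α) * z ^ (n + α - 1))) z :=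
    ((Real.hasDerivAt_rpow_const (Or.inl hz0)).add
      ((Real.hasDerivAt_rpow_const (Or.inl hz0)).const_mul ε)).add
      ((Real.hasDerivAt_rpow_const (Or.inl hz0)).const_mul δ)
  have hg : HasDerivAt (fun x : ℝ => x ^ (n + α) / (x ^ α + ε * x ^ n + δ * x ^ (n + α)))
      (((n + α) * z ^ (n + α - 1) * (z ^ α + ε * z ^ n + δ * z ^ (n + α)) -
        z ^ (n + α) * (α * z ^ (α - 1) + ε * (n * z ^ (n - 1)) + δ * ((n + α) * z ^ (n + α - 1)))) /
        (z ^ α + ε * z ^ n + δ * z ^ (n + α)) ^ 2) z :=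
    h1.div h2 (ne_of_gt hD)
  have hfg : f =ᶠ[nhds z]
      (fun x : ℝ => x ^ (n + α) / (x ^ α + ε * x ^ n + δ * x ^ (n + α))) := by
    filter_upwards [eventually_gt_nhds hz] with x hx using hf x hx
  have hf' := (hg.congr_of_eventuallyEq hfg).deriv
  -- rpow identities
  have hsum : z ^ (n + α) = z ^ n * z ^ α := by rw [Real.rpow_add hz]
  have hna1 : z ^ (n + α - 1) = z ^ n * z ^ α / z := by
    rw [Real.rpow_sub hz, Real.rpow_one, hsum]
  have hn1 : z ^ (n - 1) = z ^ n / z := by rw [Real.rpow_sub hz, Real.rpow_one]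
  have ha1 : z ^ (α - 1) = z ^ α / z := by rw [Real.rpow_sub hz, Real.rpow_one]
  have hderiv : deriv f z =
      z ^ (n + α - 1) * (n * z ^ α + ε * α * z ^ n) /
        (z ^ α + ε * z ^ n + δ * z ^ (n + α)) ^ 2 := by
    rw [hf']
    rw [div_eq_div_iff (by positivity) (by positivity)]
    rw [hna1, ha1, hn1, hsum]
    field_simp
    ring
  refine ⟨hderiv, ?_, ?_⟩
  · rw [hderiv]
    have h0 : (0:ℝ) < z ^ (n + α - 1) := Real.rpow_pos_of_pos hz _
    positivity
  · rw [hderiv]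
    set M : ℝ := max n α with hM
    have hMn : n ≤ M := le_max_left n α
    have hMa : α ≤ M := le_max_right n α
    have hM0 : (0:ℝ) < M := lt_of_lt_of_le (by linarith : (0:ℝ) < n) hMn
    have h3 : n * z ^ α + ε * α * z ^ n ≤ M * (z ^ α + ε * z ^ n + δ * z ^ (n + α)) := by
      nlinarith [mul_le_mul_of_nonneg_right hMn ha0.le,
        mul_le_mul_of_nonneg_right hMa (mul_pos hε hb0).le,
        mul_pos (mul_pos hM0 hδ) hab0]
    have h4 : z ^ α ≤ z ^ α + ε * z ^ n + δ * z ^ (n + α) := by nlinarith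
    have hzn1 : (0:ℝ) < z ^ (n - 1) := Real.rpow_pos_of_pos hz _
    rw [div_le_iff₀ (by positivity)]
    have hkey : z ^ (n + α - 1) * (n * z ^ α + ε * α * z ^ n)
        = z ^ (n - 1) * (z ^ α * (n * z ^ α + ε * α * z ^ n)) := by
      rw [hna1, hn1]; field_simp
    rw [hkey]
    have h5 : z ^ α * (n * z ^ α + ε * α * z ^ n) ≤
        (z ^ α + ε * z ^ n + δ * z ^ (n + α)) *
          (M * (z ^ α + ε * z ^ n + δ * z ^ (n + α))) :=
      mul_le_mul h4 h3 (by positivity) hD.le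
    calc z ^ (n - 1) * (z ^ α * (n * z ^ α + ε * α * z ^ n))
        ≤ z ^ (n - 1) * ((z ^ α + ε * z ^ n + δ * z ^ (n + α)) *
            (M * (z ^ α + ε * z ^ n + δ * z ^ (n + α)))) :=
          mul_le_mul_of_nonneg_left h5 hzn1.le
      _ = M * z ^ (n - 1) * (z ^ α + ε * z ^ n + δ * z ^ (n + α)) ^ 2 := by ring
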